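/- arXiv:1304.3884 — 3 statements merged into one kernel-verified Lean document; each statement's English description precedes it below -/
import Mathlib

section
/- Define s : S₃ → (ℤ/4ℤ)³ (indexing triples by {0,1,2}) by s(id) = (0,0,0), s((0 1 2)) = (3,3,2), s((0 2 1)) = (2,1,1), s((0 1)) = (3,1,0), s((0 2)) = (2,0,2), s((1 2)) = (0,3,1). Then s is a 1-cocycle for the right permutation action of S₃ on (ℤ/4ℤ)³: for all η, θ ∈ S₃ and all i ∈ {0,1,2}, s(η∘θ)(i) = s(η)(θ(i)) + s(θ)(i). Equivalently, the map Ψ(η) = (η, s(η)) is a group homomorphism from S₃ into the semidirect product S₃ ⋉ (ℤ/4ℤ)³ whose multiplication is (η,g)·(θ,h) = (η∘θ, g·θ + h) with (g·θ)(i) = g(θ(i)). -/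
def F : Equiv.Perm (Fin 3) → Fin 3 → ZMod 4 := fun π =>
  if π = 1 then ![0, 0, 0]
  else if π = Equiv.swap 0 1 * Equiv.swap 1 2 then ![3, 3, 2]
  else if π = Equiv.swap 1 2 * Equiv.swap 0 1 then ![2, 1, 1]
  else if π = Equiv.swap 0 1 then ![3, 1, 0]
  else if π = Equiv.swap 0 2 then ![2, 0, 2]
  else ![0, 3, 1]

/-- The map `s : S₃ → (ℤ/4ℤ)³` defined by the six prescribed values is a 1-cocycle
for the right permutation action of `S₃` on `(ℤ/4ℤ)³`:
`s(η∘θ)(i) = s(η)(θ(i)) + s(θ)(i)` for all `η, θ` and all `i`.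
Here multiplication of permutations is composition applying the right factor first,
`(η * θ) i = η (θ i)`, the cycle `(0 1 2)` is `Equiv.swap 0 1 * Equiv.swap 1 2`,
and `(0 2 1)` is `Equiv.swap 1 2 * Equiv.swap 0 1`. -/
theorem stmt0 (s : Equiv.Perm (Fin 3) → Fin 3 → ZMod 4)
    (h_id : s 1 = ![0, 0, 0])
    (h_012 : s (Equiv.swap 0 1 * Equiv.swap 1 2) = ![3, 3, 2])
    (h_021 : s (Equiv.swap 1 2 * Equiv.swap 0 1) = ![2, 1, 1])
    (h_01 : s (Equiv.swap 0 1) = ![3, 1, 0])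
    (h_02 : s (Equiv.swap 0 2) = ![2, 0, 2])
    (h_12 : s (Equiv.swap 1 2) = ![0, 3, 1]) :
    ∀ η θ : Equiv.Perm (Fin 3), ∀ i : Fin 3,
      s (η * θ) i = s η (θ i) + s θ i := by
  have hall : ∀ π : Equiv.Perm (Fin 3),
      π = 1 ∨ π = Equiv.swap 0 1 * Equiv.swap 1 2 ∨ π = Equiv.swap 1 2 * Equiv.swap 0 1 ∨
      π = Equiv.swap 0 1 ∨ π = Equiv.swap 0 2 ∨ π = Equiv.swap 1 2 := by decide
  have hs : ∀ π, s π = F π := by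
    intro π
    rcases hall π with rfl | rfl | rfl | rfl | rfl | rfl <;>
      simp only [h_id, h_012, h_021, h_01, h_02, h_12] <;> decide
  intro η θ i
  rw [hs, hs, hs]
  revert i
  revert η θ
  decide
end

section
/- Define s′ : S₃ → (ℤ/4ℤ)³ (indexing triples by {0,1,2}) by s′(id) = (0,0,0), s′((0 1 2)) = (3,3,2), s′((0 2 1)) = (2,1,1) on even permutations, and s′((0 1)) = (1,3,2), s′((1 2)) = (2,1,3), s′((0 2)) = (0,2,0) on transpositions. Then s′ is a 1-cocycle for the right permutation action of S₃ on (ℤ/4ℤ)³: for all η, θ ∈ S₃ and all i ∈ {0,1,2}, s′(η∘θ)(i) = s′(η)(θ(i)) + s′(θ)(i); equivalently η ↦ (η, s′(η)) is a group homomorphism into the semidirect product S₃ ⋉ (ℤ/4ℤ)³. -/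
def tbl : Equiv.Perm (Fin 3) → Fin 3 → ZMod 4 := fun g =>
  if g = 1 then ![0, 0, 0]
  else if g = Equiv.swap 0 1 * Equiv.swap 1 2 then ![3, 3, 2]
  else if g = Equiv.swap 1 2 * Equiv.swap 0 1 then ![2, 1, 1]
  else if g = Equiv.swap 0 1 then ![1, 3, 2]
  else if g = Equiv.swap 1 2 then ![2, 1, 3]
  else ![0, 2, 0]

/-- The alternative map `s′ : S₃ → (ℤ/4ℤ)³` (same values on even permutations as `s`,
redefined values on transpositions) is also a 1-cocycle for the right permutation
action of `S₃` on `(ℤ/4ℤ)³`: `s′(η∘θ)(i) = s′(η)(θ(i)) + s′(θ)(i)`.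
Here `(η * θ) i = η (θ i)`, the cycle `(0 1 2)` is `Equiv.swap 0 1 * Equiv.swap 1 2`,
and `(0 2 1)` is `Equiv.swap 1 2 * Equiv.swap 0 1`. -/
theorem stmt1 (s' : Equiv.Perm (Fin 3) → Fin 3 → ZMod 4)
    (h_id : s' 1 = ![0, 0, 0])
    (h_012 : s' (Equiv.swap 0 1 * Equiv.swap 1 2) = ![3, 3, 2])
    (h_021 : s' (Equiv.swap 1 2 * Equiv.swap 0 1) = ![2, 1, 1])
    (h_01 : s' (Equiv.swap 0 1) = ![1, 3, 2])
    (h_12 : s' (Equiv.swap 1 2) = ![2, 1, 3])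
    (h_02 : s' (Equiv.swap 0 2) = ![0, 2, 0]) :
    ∀ η θ : Equiv.Perm (Fin 3), ∀ i : Fin 3,
      s' (η * θ) i = s' η (θ i) + s' θ i := by
  have h6 : ∀ g : Equiv.Perm (Fin 3), g = 1 ∨ g = Equiv.swap 0 1 * Equiv.swap 1 2 ∨
      g = Equiv.swap 1 2 * Equiv.swap 0 1 ∨ g = Equiv.swap 0 1 ∨ g = Equiv.swap 1 2 ∨
      g = Equiv.swap 0 2 := by decide
  have key : ∀ g, s' g = tbl g := by
    intro g
    rcases h6 g with h | h | h | h | h | h <;> subst h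
    · rw [h_id]; decide
    · rw [h_012]; decide
    · rw [h_021]; decide
    · rw [h_01]; decide
    · rw [h_12]; decide
    · rw [h_02]; decide
  intro η θ i
  rw [key, key, key]
  revert η θ i
  decide
end

section
/- Let E and V be finite sets and let src, tgt : E → V be the tail and head maps of a finite directed multigraph in which every vertex has exactly two outgoing and exactly two incoming edges, i.e. for every v ∈ V the sets {e ∈ E : src e = v} and {e ∈ E : tgt e = v} each have cardinality 2. Then there exists a labeling f : E → {o, u} (equivalently f : E → Bool) such that for every vertex v, the two edges with tail v receive distinct labels and the two edges with head v receive distinct labels; equivalently, the edge set decomposes into two spanning subgraphs each having exactly one outgoing and one incoming edge at every vertex. -/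
open Finset

/-- From the "every vertex has exactly two outgoing edges" hypothesis, extract
the fixed-point-free involution sending each edge to the *other* edge with the
same source, together with its uniqueness property. -/
private lemma pairfun {E V : Type*} [Fintype E] [DecidableEq V] [LinearOrder E]
    (src : E → V) (h : ∀ v, (univ.filter (fun e : E => src e = v)).card = 2) :
    ∃ s : E → E, Function.Involutive s ∧ (∀ e, s e ≠ e) ∧
      (∀ e e' : E, e ≠ e' → src e = src e' → e' = s e) := by
  classical
  have hmem : ∀ e : E, e ∈ univ.filter (fun x : E => src x = src e) := by
    intro e; simp
  have hcard : ∀ e : E, ((univ.filter (fun x : E => src x = src e)).erase e).card = 1 := by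
    intro e
    rw [Finset.card_erase_of_mem (hmem e), h (src e)]
  have hne : ∀ e : E, ((univ.filter (fun x : E => src x = src e)).erase e).Nonempty := by
    intro e; rw [← Finset.card_pos, hcard e]; norm_num
  set s : E → E := fun e => ((univ.filter (fun x : E => src x = src e)).erase e).min' (hne e)
    with hsdef
  have hsmem : ∀ e, s e ∈ (univ.filter (fun x : E => src x = src e)).erase e :=
    fun e => Finset.min'_mem _ _
  have hsne : ∀ e, s e ≠ e := fun e => Finset.ne_of_mem_erase (hsmem e)
  have hssrc : ∀ e, src (s e) = src e := by
    intro e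
    have := Finset.mem_of_mem_erase (hsmem e)
    simpa using this
  have hset : ∀ e : E, univ.filter (fun x : E => src x = src e) = {e, s e} := by
    intro e
    symm
    refine Finset.eq_of_subset_of_card_le ?_ ?_
    · intro x hx
      rcases Finset.mem_insert.mp hx with h1 | h1
      · rw [h1]; exact hmem e
      · rw [Finset.mem_singleton.mp h1]
        simp [hssrc e]
    · rw [h (src e), Finset.card_pair (Ne.symm (hsne e))]
  have huniq : ∀ e e' : E, e ≠ e' → src e = src e' → e' = s e := by
    intro e e' hnee hsrcee
    have he' : e' ∈ univ.filter (fun x : E => src x = src e) := by simp [hsrcee.symm]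
    rw [hset e] at he'
    rcases Finset.mem_insert.mp he' with rfl | he'
    · exact absurd rfl hnee
    · exact Finset.mem_singleton.mp he'
  refine ⟨s, ?_, hsne, huniq⟩
  intro e
  exact (huniq (s e) e (hsne e) (hssrc e)).symm

/-- Given two fixed-point-free involutive permutations `s t` of a finite type
(with a linear order for choice purposes), there is a 2-coloring `f` such that
`s` and `t` both flip the color.  This is the combinatorial heart: the group
generated by `s` and `t` is infinite dihedral, all its odd-length elements are
conjugates of `s` or `t`, hence fixed-point-free, so the parity labeling is
well-defined on each orbit. -/
private lemma keylem {E : Type*} [Fintype E] [LinearOrder E]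
    (s t : Equiv.Perm E) (hs : ∀ e, s (s e) = e) (ht : ∀ e, t (t e) = e)
    (hs' : ∀ e, s e ≠ e) (ht' : ∀ e, t e ≠ e) :
    ∃ f : E → Bool, (∀ e, f (s e) ≠ f e) ∧ (∀ e, f (t e) ≠ f e) := by
  classical
  set π : Equiv.Perm E := t * s with hπ
  have hss : s * s = 1 := by ext x; simp [Equiv.Perm.mul_apply, hs]
  have htt : t * t = 1 := by ext x; simp [Equiv.Perm.mul_apply, ht]
  have hsinv : s⁻¹ = s := by
    rw [inv_eq_iff_mul_eq_one]; exact hss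
  have htinv : t⁻¹ = t := by
    rw [inv_eq_iff_mul_eq_one]; exact htt
  have hπinv : π⁻¹ = s * t := by
    rw [hπ, mul_inv_rev, hsinv, htinv]
  have hconj1 : s * π * s⁻¹ = π⁻¹ := by
    rw [hπinv, hsinv, hπ]
    calc s * (t * s) * s = s * t * (s * s) := by group
      _ = s * t := by rw [hss, mul_one]
  have hconj : ∀ k : ℤ, s * π ^ k = π ^ (-k) * s := by
    intro k
    have h1 : (MulAut.conj s) (π ^ k) = ((MulAut.conj s) π) ^ k := map_zpow _ _ _
    have h2 : (MulAut.conj s) π = π⁻¹ := by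
      simpa [MulAut.conj_apply] using hconj1
    rw [h2] at h1
    have h3 : s * π ^ k * s⁻¹ = π ^ (-k) := by
      simpa [MulAut.conj_apply, inv_zpow, zpow_neg] using h1
    calc s * π ^ k = s * π ^ k * s⁻¹ * s := by group
      _ = π ^ (-k) * s := by rw [h3]
  -- applying π^{-m} to s e
  have happ : ∀ (m : ℤ) (x : E), (π ^ (-m)) (s x) = s ((π ^ m) x) := by
    intro m x
    calc (π ^ (-m)) (s x) = (π ^ (-m) * s) x := rfl
      _ = (s * π ^ m) x := by rw [hconj]
      _ = s ((π ^ m) x) := rfl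
  -- the key fixed-point freeness
  have hkey : ∀ (e : E) (k : ℤ), (π ^ k) e ≠ s e := by
    intro e k hfix
    rcases Int.even_or_odd k with ⟨m, hm⟩ | ⟨m, hm⟩
    · -- k = m + m
      have h1 : (π ^ (-m)) ((π ^ k) e) = (π ^ m) e := by
        rw [← Equiv.Perm.mul_apply, ← zpow_add]
        congr 2
        omega
      rw [hfix, happ] at h1
      exact hs' _ h1
    · -- k = 2m + 1
      have h1 : (π ^ (-m)) ((π ^ k) e) = (π ^ (m + 1)) e := by
        rw [← Equiv.Perm.mul_apply, ← zpow_add]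
        congr 2
        omega
      rw [hfix, happ] at h1
      have h2 : (π ^ (m + 1 : ℤ)) e = t (s ((π ^ m) e)) := by
        rw [show (m + 1 : ℤ) = 1 + m by ring, zpow_add, zpow_one, Equiv.Perm.mul_apply,
          hπ, Equiv.Perm.mul_apply]
      rw [h2] at h1
      exact ht' _ h1.symm
  -- orbits and the minimum-based coloring
  have horb : ∀ e : E, e ∈ univ.filter (fun x : E => π.SameCycle e x) := by
    intro e; simp [Equiv.Perm.SameCycle.refl]
  set m : E → WithTop E := fun e => (univ.filter (fun x : E => π.SameCycle e x)).min with hmdef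
  have hmmem : ∀ e : E, ∃ a : E, m e = (a : WithTop E) ∧ π.SameCycle e a := by
    intro e
    obtain ⟨a, ha⟩ := Finset.min_of_nonempty ⟨e, horb e⟩
    refine ⟨a, ha, ?_⟩
    have := Finset.mem_of_min ha
    simpa using this
  have hA : ∀ e e' : E, π.SameCycle e e' → m e = m e' := by
    intro e e' hcyc
    have : (univ.filter (fun x : E => π.SameCycle e x))
        = (univ.filter (fun x : E => π.SameCycle e' x)) := by
      ext x
      simp only [Finset.mem_filter, Finset.mem_univ, true_and]
      exact ⟨fun h => hcyc.symm.trans h, fun h => hcyc.trans h⟩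
    simp [hmdef, this]
  have hB : ∀ e : E, m e ≠ m (s e) := by
    intro e heq
    obtain ⟨a, ha, hcyc⟩ := hmmem e
    obtain ⟨b, hb, hcyc'⟩ := hmmem (s e)
    rw [ha, hb] at heq
    have hab : a = b := by exact_mod_cast heq
    subst hab
    obtain ⟨k, hk⟩ := hcyc.trans hcyc'.symm
    exact hkey e k hk
  have hC : ∀ e : E, π.SameCycle e (s e) → False := by
    intro e ⟨k, hk⟩
    exact hkey e k hk
  refine ⟨fun e => decide (m e < m (s e)), ?_, ?_⟩
  · intro e
    have h1 : m (s (s e)) = m e := by rw [hs e]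
    have hne := hB e
    simp only [h1]
    rcases hne.lt_or_gt with h | h <;> simp [h, asymm h]
  · intro e
    have hte : (π ^ (1 : ℤ)) (s e) = t e := by
      simp [hπ, Equiv.Perm.mul_apply, hs e]
    have h1 : m (t e) = m (s e) := (hA (s e) (t e) ⟨1, hte⟩).symm
    have hste : (π ^ (-1 : ℤ)) e = s (t e) := by
      simp only [zpow_neg, zpow_one]
      rw [hπinv]
      rfl
    have h2 : m (s (t e)) = m e := (hA e (s (t e)) ⟨-1, hste⟩).symm
    have hne := hB e
    simp only [h1, h2]
    rcases hne.lt_or_gt with h | h <;> simp [h, asymm h]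

/-- Let `src, tgt : E → V` be the tail and head maps of a finite directed
multigraph in which every vertex has exactly two outgoing and two incoming
edges.  Then there is a labeling `f : E → Bool` such that for every vertex the
two edges with that tail receive distinct labels and the two edges with that
head receive distinct labels. -/
theorem stmt6 {E V : Type*} [Fintype E] [Fintype V] [DecidableEq V]
    (src tgt : E → V)
    (hsrc : ∀ v : V, (Finset.univ.filter (fun e : E => src e = v)).card = 2)
    (htgt : ∀ v : V, (Finset.univ.filter (fun e : E => tgt e = v)).card = 2) :
    ∃ f : E → Bool,
      (∀ e e' : E, e ≠ e' → src e = src e' → f e ≠ f e') ∧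
      (∀ e e' : E, e ≠ e' → tgt e = tgt e' → f e ≠ f e') := by
  classical
  letI : LinearOrder E := LinearOrder.lift' (Fintype.equivFin E) (Fintype.equivFin E).injective
  obtain ⟨s, hsinv, hsne, hsuniq⟩ := pairfun src hsrc
  obtain ⟨t, htinv, htne, htuniq⟩ := pairfun tgt htgt
  obtain ⟨f, hf1, hf2⟩ := keylem hsinv.toPerm htinv.toPerm
    (fun e => by simp [hsinv e]) (fun e => by simp [htinv e])
    (fun e => by simpa using hsne e) (fun e => by simpa using htne e)
  refine ⟨f, ?_, ?_⟩
  · intro e e' hne hsrcee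
    have he' : e' = s e := hsuniq e e' hne hsrcee
    subst he'
    have := hf1 e
    simpa using this.symm
  · intro e e' hne htgee
    have he' : e' = t e := htuniq e e' hne htgee
    subst he'
    have := hf2 e
    simpa using this.symm
end
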